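/- Let V ∈ ℝ^{m × n}, W ∈ ℝ^{m × p'}, M ∈ ℝ^{p' × r}, H ∈ ℝ^{r × n}, let λ_1 ≥ 0 and λ_2 ≥ 0, and fix indices p ∈ {1,...,p'} and r' ∈ {1,...,r}. Define g : ℝ → ℝ by g(s) = (1/2) Σ_{i=1}^{m} Σ_{j=1}^{n} ( V_{ij} − (W M H)_{ij} − s W_{ip} H_{r'j} )² + λ_1 ( M_{pr'} + s ) + (λ_2/2) ( M_{pr'} + s )². If (Wᵀ W)_{pp} (H Hᵀ)_{r'r'} + λ_2 > 0, then g is a quadratic function of s whose unique minimizer is s* = ( (Wᵀ V Hᵀ − Wᵀ W M H Hᵀ)_{pr'} − λ_1 − λ_2 M_{pr'} ) / ( (Wᵀ W)_{pp} (H Hᵀ)_{r'r'} + λ_2 ). -/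

import Mathlib

open Matrix

/-- The coordinate-descent update for one entry of the middle factor
in penalized three-factor NMF: the objective
`g(s) = (1/2) Σ_i Σ_j (V_{ij} − (WMH)_{ij} − s W_{ip} H_{r'j})² + λ₁(M_{pr'} + s) + (λ₂/2)(M_{pr'} + s)²`
is a quadratic function of `s` whose unique minimizer is
`s* = ((Wᵀ V Hᵀ − Wᵀ W M H Hᵀ)_{pr'} − λ₁ − λ₂ M_{pr'}) / ((Wᵀ W)_{pp} (H Hᵀ)_{r'r'} + λ₂)`,
provided `(Wᵀ W)_{pp} (H Hᵀ)_{r'r'} + λ₂ > 0`. -/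
theorem nmf_middle_factor_update (m n p' r : ℕ)
    (V : Matrix (Fin m) (Fin n) ℝ) (W : Matrix (Fin m) (Fin p') ℝ)
    (M : Matrix (Fin p') (Fin r) ℝ) (H : Matrix (Fin r) (Fin n) ℝ)
    (l1 l2 : ℝ) (hl1 : 0 ≤ l1) (hl2 : 0 ≤ l2)
    (p : Fin p') (r' : Fin r)
    (hpos : 0 < (Wᵀ * W) p p * (H * Hᵀ) r' r' + l2) :
    let g : ℝ → ℝ := fun s =>
      (1 / 2) * ∑ i, ∑ j, (V i j - (W * M * H) i j - s * W i p * H r' j) ^ 2 +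
        l1 * (M p r' + s) + (l2 / 2) * (M p r' + s) ^ 2
    let sstar : ℝ :=
      ((Wᵀ * V * Hᵀ - Wᵀ * W * M * H * Hᵀ) p r' - l1 - l2 * M p r') /
        ((Wᵀ * W) p p * (H * Hᵀ) r' r' + l2)
    (∃ a b c : ℝ, 0 < a ∧ ∀ s : ℝ, g s = a * s ^ 2 + b * s + c) ∧
      ∀ s : ℝ, s ≠ sstar → g sstar < g s := by
  intro g sstar
  set A : ℝ := (Wᵀ * W) p p * (H * Hᵀ) r' r' + l2 with hA
  set L : ℝ := (Wᵀ * V * Hᵀ - Wᵀ * W * M * H * Hᵀ) p r' with hLdef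
  have hW : (Wᵀ * W) p p = ∑ i, W i p ^ 2 := by
    simp [mul_apply, transpose_apply, sq]
  have hH : (H * Hᵀ) r' r' = ∑ j, H r' j ^ 2 := by
    simp [mul_apply, transpose_apply, sq]
  have hL : L = ∑ i, ∑ j, (V i j - (W * M * H) i j) * (W i p * H r' j) := by
    have h1 : Wᵀ * V * Hᵀ - Wᵀ * W * M * H * Hᵀ = Wᵀ * (V - W * M * H) * Hᵀ := by
      rw [Matrix.mul_sub, Matrix.sub_mul]
      simp [Matrix.mul_assoc]
    rw [hLdef, h1]
    rw [Finset.sum_comm]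
    simp only [mul_apply, transpose_apply, Matrix.sub_apply, Finset.sum_mul]
    apply Finset.sum_congr rfl; intro j _
    apply Finset.sum_congr rfl; intro i _
    ring
  have key : ∀ s : ℝ, ∑ i, ∑ j, (V i j - (W * M * H) i j - s * W i p * H r' j) ^ 2
      = (∑ i, ∑ j, (V i j - (W * M * H) i j) ^ 2)
        - 2 * s * (∑ i, ∑ j, (V i j - (W * M * H) i j) * (W i p * H r' j))
        + s ^ 2 * ((∑ i, W i p ^ 2) * (∑ j, H r' j ^ 2)) := by
    intro s
    rw [Finset.sum_mul_sum, Finset.mul_sum, Finset.mul_sum,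
      ← Finset.sum_sub_distrib, ← Finset.sum_add_distrib]
    apply Finset.sum_congr rfl; intro i _
    rw [Finset.mul_sum, Finset.mul_sum, ← Finset.sum_sub_distrib, ← Finset.sum_add_distrib]
    apply Finset.sum_congr rfl; intro j _
    ring
  have hquad : ∀ s : ℝ, g s = (A / 2) * s ^ 2 + (l1 + l2 * M p r' - L) * s
      + ((1 / 2) * (∑ i, ∑ j, (V i j - (W * M * H) i j) ^ 2)
          + l1 * M p r' + (l2 / 2) * (M p r') ^ 2) := by
    intro s
    show (1 / 2) * ∑ i, ∑ j, _ + _ + _ = _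
    rw [key s, hA, hW, hH, hL]
    ring
  have hA0 : A ≠ 0 := ne_of_gt hpos
  have hsdef : sstar = (L - l1 - l2 * M p r') / A := rfl
  have hstar : A * sstar = L - l1 - l2 * M p r' := by
    rw [hsdef]; field_simp
  clear_value sstar A L
  have hdiff : ∀ s : ℝ, g s - g sstar = (A / 2) * (s - sstar) ^ 2 := by
    intro s
    rw [hquad s, hquad sstar]
    linear_combination (s - sstar) * hstar
  refine ⟨⟨A / 2, l1 + l2 * M p r' - L, _, by positivity, hquad⟩, ?_⟩
  intro s hs
  have h2 : s - sstar ≠ 0 := sub_ne_zero.mpr hs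
  have h3 : 0 < (s - sstar) ^ 2 :=
    lt_of_le_of_ne (sq_nonneg _) (Ne.symm (pow_ne_zero 2 h2))
  have h1 : 0 < (A / 2) * (s - sstar) ^ 2 := mul_pos (by positivity) h3
  rw [← hdiff s] at h1
  exact sub_pos.mp h1
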